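/- Let λ be a partition written uniquely as λ = (a_1^{b_1}, …, a_r^{b_r}) with a_1 > a_2 > … > a_r > 0 and all b_i > 0 (so λ consists of r rectangles). For 1 ≤ i ≤ r−1 define λ^i = (a_1^{b_1}, …, a_{i−1}^{b_{i−1}}, a_i^{b_i−1}, (a_{i+1}−1)^{b_{i+1}+1}, a_{i+2}^{b_{i+2}}, …, a_r^{b_r}). Then the conjugate satisfies (λ^T)^i = (λ^{r−i})^T for all i = 1, …, r−1. -/

import Mathlib

/-- The partition `(a_1^{b_1}, …, a_r^{b_r})` given by lists of part sizes `a`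
and multiplicities `b`, as a function (0-indexed; zero beyond the last part). -/
def rectsP (a b : List ℕ) : ℕ → ℕ :=
  fun i => ((a.zip b).flatMap fun p => List.replicate p.2 p.1).getD i 0

/-- The conjugate (transpose) partition of `f`: `(conjP f) j = #{i : f i > j}`. -/
noncomputable def conjP (f : ℕ → ℕ) : ℕ → ℕ := fun j => Set.ncard {i : ℕ | j < f i}

/-- Removing the `i`-th boundary hook (0-indexed; this is the paper's `λ^{i+1}`):
`λ^{i+1} = (a_1^{b_1}, …, a_i^{b_i}, a_{i+1}^{b_{i+1}−1}, (a_{i+2}−1)^{b_{i+2}+1},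
a_{i+3}^{b_{i+3}}, …, a_r^{b_r})`. -/
def hookRemove (a b : List ℕ) (i : ℕ) : ℕ → ℕ :=
  rectsP (a.set (i + 1) (a.getD (i + 1) 0 - 1))
    ((b.set i (b.getD i 0 - 1)).set (i + 1) (b.getD (i + 1) 0 + 1))


def psum (l : List ℕ) (k : ℕ) : ℕ := (l.take k).sum

lemma psum_zero (l : List ℕ) : psum l 0 = 0 := rfl

lemma psum_succ (l : List ℕ) (k : ℕ) : psum l (k+1) = psum l k + l.getD k 0 := by
  by_cases h : k < l.length
  · rw [psum, List.sum_take_succ l k h, List.getD_eq_getElem l 0 h]; rfl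
  · push_neg at h
    rw [psum, psum, List.take_of_length_le (by omega), List.take_of_length_le (by omega),
      List.getD_eq_default l 0 h]
    omega

lemma psum_mono (l : List ℕ) {k k' : ℕ} (h : k ≤ k') : psum l k ≤ psum l k' := by
  induction k' with
  | zero => exact le_of_eq (by rw [Nat.le_zero.mp h])
  | succ n ih =>
    rcases Nat.lt_or_ge k (n+1) with h' | h'
    · have := ih (by omega); rw [psum_succ]; omega
    · have hk : k = n + 1 := by omega
      subst hk; exact le_rfl

lemma psum_length (l : List ℕ) : psum l l.length = l.sum := by
  rw [psum, List.take_length]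

lemma psum_cons (y : ℕ) (l : List ℕ) (k : ℕ) : psum (y :: l) (k+1) = y + psum l k := by
  rw [psum, List.take_succ_cons, List.sum_cons]; rfl

lemma rectsP_nil_left (d : List ℕ) : rectsP [] d = fun _ => 0 := by
  funext j; simp [rectsP]

lemma rectsP_nil_right (c : List ℕ) : rectsP c [] = fun _ => 0 := by
  funext j; simp [rectsP]

lemma rectsP_cons (x y : ℕ) (c d : List ℕ) (j : ℕ) :
    rectsP (x :: c) (y :: d) j = if j < y then x else rectsP c d (j - y) := by
  unfold rectsP
  rw [List.zip_cons_cons, List.flatMap_cons]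
  by_cases h : j < y
  · rw [if_pos h, List.getD_append _ _ _ _ (by simpa using h),
      List.getD_eq_getElem _ _ (by simpa using h), List.getElem_replicate]
  · rw [if_neg h, List.getD_append_right _ _ _ _ (by simpa using Nat.le_of_not_lt h)]
    simp

lemma rectsP_eval : ∀ (c d : List ℕ), c.length = d.length → ∀ (k j : ℕ),
    psum d k ≤ j → j < psum d (k+1) → rectsP c d j = c.getD k 0 := by
  intro c
  induction c with
  | nil =>
    intro d hl k j h1 h2
    have : d = [] := List.eq_nil_of_length_eq_zero hl.symm
    subst this
    simp [psum, List.take_nil] at h2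
  | cons x ct ih =>
    intro d hl k j h1 h2
    match d with
    | [] => simp at hl
    | y :: dt =>
      rw [rectsP_cons]
      match k with
      | 0 =>
        rw [psum_cons, psum_zero] at h2
        rw [if_pos (by omega)]
        rfl
      | k+1 =>
        rw [psum_cons] at h1 h2
        rw [if_neg (by omega)]
        have := ih dt (by simpa using hl) k (j - y) (by omega) (by omega)
        rw [this]
        rfl

lemma rectsP_zero : ∀ (c d : List ℕ), c.length = d.length → ∀ j, d.sum ≤ j → rectsP c d j = 0 := by
  intro c
  induction c with
  | nil => intro d hl j h; rw [rectsP_nil_left]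
  | cons x ct ih =>
    intro d hl j h
    match d with
    | [] => simp at hl
    | y :: dt =>
      rw [List.sum_cons] at h
      rw [rectsP_cons, if_neg (by omega)]
      exact ih dt (by simpa using hl) _ (by omega)

lemma countP_sorted (j : ℕ) : ∀ (c : List ℕ), c.Pairwise (· ≥ ·) →
    (∀ k < c.countP (fun x => decide (j < x)), j < c.getD k 0) ∧
    (∀ k, c.countP (fun x => decide (j < x)) ≤ k → c.getD k 0 ≤ j) := by
  intro c
  induction c with
  | nil =>
    intro _
    constructor
    · intro k hk; simp at hk
    · intro k _; simp
  | cons x t ih =>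
    intro hp
    rw [List.pairwise_cons] at hp
    obtain ⟨hx, hpt⟩ := hp
    obtain ⟨ih1, ih2⟩ := ih hpt
    rw [List.countP_cons]
    by_cases hj : j < x
    · rw [if_pos (by simpa using hj)]
      constructor
      · intro k hk
        match k with
        | 0 => exact hj
        | k+1 => exact ih1 k (by omega)
      · intro k hk
        match k with
        | 0 => omega
        | k+1 => exact ih2 k (by omega)
    · rw [if_neg (by simpa using hj)]
      have hct : t.countP (fun x => decide (j < x)) = 0 := by
        rw [List.countP_eq_zero]
        intro y hy
        simp only [decide_eq_true_eq]
        have := hx y hy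
        omega
      rw [hct]
      constructor
      · intro k hk; omega
      · intro k _
        match k with
        | 0 => simpa using Nat.le_of_not_lt hj
        | k+1 =>
          show t.getD k 0 ≤ j
          by_cases hk : k < t.length
          · have : t.getD k 0 ∈ t := by
              rw [List.getD_eq_getElem t 0 hk]; exact List.getElem_mem hk
            have := hx _ this
            omega
          · rw [List.getD_eq_default t 0 (by omega)]; omega

lemma exists_interval (d : List ℕ) : ∀ (k : ℕ), ∀ i < psum d k,
    ∃ t < k, psum d t ≤ i ∧ i < psum d (t+1) := by
  intro k
  induction k with
  | zero => intro i hi; simp [psum_zero] at hi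
  | succ n ih =>
    intro i hi
    rcases Nat.lt_or_ge i (psum d n) with h | h
    · obtain ⟨t, ht, h1, h2⟩ := ih i h
      exact ⟨t, by omega, h1, h2⟩
    · exact ⟨n, by omega, h, hi⟩

lemma ncard_Iio (n : ℕ) : Set.ncard (Set.Iio n) = n := by
  rw [← Finset.coe_range, Set.ncard_coe_finset, Finset.card_range]

/-- Master formula: conjugate of a rectangle decomposition. -/
lemma conjP_rectsP (c d : List ℕ) (hl : c.length = d.length) (hc : c.Pairwise (· ≥ ·))
    (j : ℕ) : conjP (rectsP c d) j = psum d (c.countP (fun x => decide (j < x))) := by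
  set m := c.countP (fun x => decide (j < x)) with hm
  obtain ⟨h1, h2⟩ := countP_sorted j c hc
  have hmlen : m ≤ d.length := hl ▸ List.countP_le_length
  have hset : {i : ℕ | j < rectsP c d i} = Set.Iio (psum d m) := by
    ext i
    simp only [Set.mem_setOf_eq, Set.mem_Iio]
    constructor
    · intro hji
      by_contra hcon
      push_neg at hcon
      rcases Nat.lt_or_ge i d.sum with hi | hi
      · rw [← psum_length] at hi
        obtain ⟨t, ht, ht1, ht2⟩ := exists_interval d d.length i hi
        have hft : rectsP c d i = c.getD t 0 := rectsP_eval c d hl t i ht1 ht2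
        have hmt : m ≤ t := by
          by_contra hmt
          push_neg at hmt
          have : psum d (t+1) ≤ psum d m := psum_mono d (by omega)
          omega
        have := h2 t hmt
        omega
      · have : rectsP c d i = 0 := rectsP_zero c d hl i hi
        omega
    · intro hi
      obtain ⟨t, ht, ht1, ht2⟩ := exists_interval d m i hi
      have hft : rectsP c d i = c.getD t 0 := rectsP_eval c d hl t i ht1 ht2
      rw [hft]
      exact h1 t ht
  rw [conjP, hset, ncard_Iio]

/-- Generic transfer: if the prefix sums / entries of `(e,g)` match the
conjugate data of `(c,d)`, then `rectsP e g` is the conjugate of `rectsP c d`. -/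
lemma key_lemma (r : ℕ) (c d e g : List ℕ) (hc : c.length = r) (hd : d.length = r)
    (hg : g.length = r) (he : e.length = r) (hcp : c.Pairwise (· ≥ ·))
    (I1 : ∀ k ≤ r, psum g k = c.getD (r - k) 0)
    (I2 : ∀ k < r, e.getD k 0 = psum d (r - k)) :
    conjP (rectsP c d) = rectsP e g := by
  funext j
  rw [conjP_rectsP c d (by omega) hcp j]
  set m := c.countP (fun x => decide (j < x)) with hm
  obtain ⟨h1, h2⟩ := countP_sorted j c hcp
  have hmr : m ≤ r := hc ▸ List.countP_le_length
  rcases Nat.eq_zero_or_pos m with h0 | hpos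
  · rw [h0, psum_zero]
    have hgs : g.sum ≤ j := by
      rw [← psum_length, hg, I1 r le_rfl, Nat.sub_self]
      exact h2 0 (by omega)
    rw [rectsP_zero e g (by omega) j hgs]
  · have hlow : psum g (r - m) ≤ j := by
      rw [I1 (r - m) (by omega)]
      have : r - (r - m) = m := by omega
      rw [this]
      exact h2 m le_rfl
    have hup : j < psum g (r - m + 1) := by
      rw [I1 (r - m + 1) (by omega)]
      have : r - (r - m + 1) = m - 1 := by omega
      rw [this]
      exact h1 (m - 1) (by omega)
    rw [rectsP_eval e g (by omega) (r - m) j hlow hup, I2 (r - m) (by omega)]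
    congr 1
    omega

/-- Entries of a flattened rectangle list are entries of `c`. -/
lemma flat_pos (c d : List ℕ) (hcp : ∀ x ∈ c, 0 < x) :
    ∀ x ∈ (c.zip d).flatMap fun p => List.replicate p.2 p.1, 0 < x := by
  intro x hx
  rw [List.mem_flatMap] at hx
  obtain ⟨p, hp, hxp⟩ := hx
  rw [List.eq_of_mem_replicate hxp]
  exact hcp _ (List.of_mem_zip hp).1

lemma replicate_append_inj (x : ℕ) : ∀ (n n' : ℕ) (L L' : List ℕ),
    (∀ z, L.head? = some z → z ≠ x) → (∀ z, L'.head? = some z → z ≠ x) →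
    List.replicate n x ++ L = List.replicate n' x ++ L' → n = n' ∧ L = L' := by
  intro n
  induction n with
  | zero =>
    intro n' L L' hL hL' h
    match n' with
    | 0 => exact ⟨rfl, by simpa using h⟩
    | n'+1 =>
      exfalso
      simp only [List.replicate_succ, List.replicate_zero, List.nil_append, List.cons_append] at h
      have : L.head? = some x := by rw [h]; rfl
      exact hL x this rfl
  | succ n ih =>
    intro n' L L' hL hL' h
    match n' with
    | 0 =>
      exfalso
      simp only [List.replicate_succ, List.replicate_zero, List.nil_append, List.cons_append] at h
      have : L'.head? = some x := by rw [← h]; rfl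
      exact hL' x this rfl
    | n'+1 =>
      simp only [List.replicate_succ, List.cons_append, List.cons.injEq] at h
      obtain ⟨n_eq, L_eq⟩ := ih n' L L' hL hL' h.2
      exact ⟨by omega, L_eq⟩

lemma flat_head (c d : List ℕ) (hl : c.length = d.length) (hdp : ∀ x ∈ d, 0 < x) :
    ∀ z, ((c.zip d).flatMap fun p => List.replicate p.2 p.1).head? = some z → z ∈ c := by
  intro z hz
  match c, d with
  | [], d => simp at hz
  | x :: ct, [] => simp at hl
  | x :: ct, y :: dt =>
    rw [List.zip_cons_cons, List.flatMap_cons] at hz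
    have hy := hdp y (by simp)
    match y with
    | 0 => omega
    | y+1 =>
      rw [List.replicate_succ, List.cons_append, List.head?_cons] at hz
      injection hz with h1
      simp [← h1]

lemma flat_inj : ∀ (c d c' d' : List ℕ), c.length = d.length → c'.length = d'.length →
    c.Chain' (· > ·) → c'.Chain' (· > ·) →
    (∀ x ∈ d, 0 < x) → (∀ x ∈ d', 0 < x) →
    ((c.zip d).flatMap fun p => List.replicate p.2 p.1)
      = ((c'.zip d').flatMap fun p => List.replicate p.2 p.1) →
    c = c' ∧ d = d' := by
  intro c
  induction c with
  | nil =>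
    intro d c' d' hl hl' _ _ _ hdp' h
    have hd : d = [] := List.eq_nil_of_length_eq_zero hl.symm
    subst hd
    match c', d' with
    | [], d' => exact ⟨rfl, (List.eq_nil_of_length_eq_zero (show d'.length = 0 by simpa using hl'.symm)).symm⟩
    | x' :: ct', [] => simp at hl'
    | x' :: ct', y' :: dt' =>
      exfalso
      rw [List.zip_nil_left, List.flatMap_nil, List.zip_cons_cons, List.flatMap_cons] at h
      have hy' := hdp' y' (by simp)
      have : (List.replicate y' x' ++ (ct'.zip dt').flatMap fun p => List.replicate p.2 p.1).length = 0 := by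
        rw [← h]; rfl
      rw [List.length_append, List.length_replicate] at this
      omega
  | cons x ct ih =>
    intro d c' d' hl hl' hch hch' hdp hdp' h
    match d with
    | [] => simp at hl
    | y :: dt =>
      match c', d' with
      | [], e' =>
        exfalso
        have hd' : e' = [] := List.eq_nil_of_length_eq_zero (by simpa using hl'.symm)
        subst hd'
        rw [List.zip_nil_left, List.flatMap_nil, List.zip_cons_cons, List.flatMap_cons] at h
        have hy := hdp y (by simp)
        have : (List.replicate y x ++ (ct.zip dt).flatMap fun p => List.replicate p.2 p.1).length = 0 := by
          rw [h]; rfl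
        rw [List.length_append, List.length_replicate] at this
        omega
      | x' :: ct', [] => simp at hl'
      | x' :: ct', y' :: dt' =>
        rw [List.zip_cons_cons, List.flatMap_cons, List.zip_cons_cons, List.flatMap_cons] at h
        have hy := hdp y (by simp)
        have hy' := hdp' y' (by simp)
        -- first entries agree
        have hx : x = x' := by
          match y, y' with
          | y+1, y'+1 =>
            rw [List.replicate_succ, List.replicate_succ, List.cons_append, List.cons_append] at h
            injection h
        subst hx
        -- heads of the tails differ from x
        have hhead : ∀ z, ((ct.zip dt).flatMap fun p => List.replicate p.2 p.1).head? = some z → z ≠ x := by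
          intro z hz
          have hzmem := flat_head ct dt (by simpa using hl) (fun u hu => hdp u (by simp [hu])) z hz
          have hpw := List.isChain_iff_pairwise.mp hch
          rw [List.pairwise_cons] at hpw
          have := hpw.1 z hzmem
          omega
        have hhead' : ∀ z, ((ct'.zip dt').flatMap fun p => List.replicate p.2 p.1).head? = some z → z ≠ x := by
          intro z hz
          have hzmem := flat_head ct' dt' (by simpa using hl') (fun u hu => hdp' u (by simp [hu])) z hz
          have hpw := List.isChain_iff_pairwise.mp hch'
          rw [List.pairwise_cons] at hpw
          have := hpw.1 z hzmem
          omega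
        obtain ⟨hyy, htails⟩ := replicate_append_inj x y y' _ _ hhead hhead' h
        obtain ⟨hc, hd⟩ := ih dt ct' dt' (by simpa using hl) (by simpa using hl')
          (List.IsChain.tail hch) (List.IsChain.tail hch')
          (fun u hu => hdp u (by simp [hu])) (fun u hu => hdp' u (by simp [hu])) htails
        exact ⟨by rw [hc], by rw [hyy, hd]⟩

/-- Uniqueness of the canonical rectangle decomposition. -/
lemma rects_unique (c d c' d' : List ℕ) (hl : c.length = d.length) (hl' : c'.length = d'.length)
    (hch : c.Chain' (· > ·)) (hch' : c'.Chain' (· > ·))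
    (hcp : ∀ x ∈ c, 0 < x) (hdp : ∀ x ∈ d, 0 < x)
    (hcp' : ∀ x ∈ c', 0 < x) (hdp' : ∀ x ∈ d', 0 < x)
    (h : rectsP c d = rectsP c' d') : c = c' ∧ d = d' := by
  set L := (c.zip d).flatMap fun p => List.replicate p.2 p.1 with hL
  set L' := (c'.zip d').flatMap fun p => List.replicate p.2 p.1 with hL'
  have hgetD : ∀ j, L.getD j 0 = L'.getD j 0 := by
    intro j
    have := congrFun h j
    exact this
  have hlen_iff : ∀ j, j < L.length ↔ j < L'.length := by
    intro j
    constructor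
    · intro hj
      by_contra hcon
      push_neg at hcon
      have h1 : 0 < L.getD j 0 := by
        rw [List.getD_eq_getElem L 0 hj]
        exact flat_pos c d hcp _ (List.getElem_mem hj)
      rw [hgetD j, List.getD_eq_default L' 0 hcon] at h1
      omega
    · intro hj
      by_contra hcon
      push_neg at hcon
      have h1 : 0 < L'.getD j 0 := by
        rw [List.getD_eq_getElem L' 0 hj]
        exact flat_pos c' d' hcp' _ (List.getElem_mem hj)
      rw [← hgetD j, List.getD_eq_default L 0 hcon] at h1
      omega
  have hlen : L.length = L'.length := by
    rcases Nat.lt_trichotomy L.length L'.length with h1 | h1 | h1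
    · have := (hlen_iff L.length).mpr h1; omega
    · exact h1
    · have := (hlen_iff L'.length).mp h1; omega
  have hLL : L = L' := by
    apply List.ext_getElem hlen
    intro n h1 h2
    have := hgetD n
    rwa [List.getD_eq_getElem L 0 h1, List.getD_eq_getElem L' 0 h2] at this
  exact flat_inj c d c' d' hl hl' hch hch' hdp hdp' hLL

lemma getD_set (l : List ℕ) (i k x : ℕ) (hi : i < l.length) :
    (l.set i x).getD k 0 = if i = k then x else l.getD k 0 := by
  by_cases hk : k < l.length
  · rw [List.getD_eq_getElem _ 0 (by rw [List.length_set]; omega), List.getElem_set]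
    by_cases hik : i = k
    · rw [if_pos hik, if_pos hik]
    · rw [if_neg hik, if_neg hik, List.getD_eq_getElem l 0 hk]
  · rw [if_neg (by omega), List.getD_eq_default _ 0 (by rw [List.length_set]; omega),
      List.getD_eq_default l 0 (by omega)]

section Aux

lemma cr_pos (r : ℕ) (b : List ℕ) (hb : b.length = r) (hbp : ∀ x ∈ b, 0 < x) :
    ∀ s, s < r → 0 < b.getD s 0 := by
  intro s hs
  rw [List.getD_eq_getElem b 0 (by omega)]
  exact hbp _ (List.getElem_mem (by omega))

lemma cr_strict (r : ℕ) (a : List ℕ) (ha : a.length = r) (hch : a.Chain' (· > ·))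
    (hap : ∀ x ∈ a, 0 < x) :
    ∀ s t : ℕ, s < t → s < r → a.getD t 0 < a.getD s 0 := by
  intro s t hst hs
  by_cases ht : t < r
  · have hpw := List.isChain_iff_pairwise.mp hch
    rw [List.pairwise_iff_getElem] at hpw
    have := hpw s t (by omega) (by omega) hst
    rwa [List.getD_eq_getElem a 0 (by omega), List.getD_eq_getElem a 0 (by omega)]
  · rw [List.getD_eq_default a 0 (by omega)]
    exact cr_pos r a ha hap s hs

lemma cr_psum_strict (r : ℕ) (b : List ℕ) (hb : b.length = r) (hbp : ∀ x ∈ b, 0 < x) :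
    ∀ s t : ℕ, s < t → t ≤ r → psum b s < psum b t := by
  intro s t hst ht
  have h1 : psum b (s+1) ≤ psum b t := psum_mono b (by omega)
  have h2 := psum_succ b s
  have h3 := cr_pos r b hb hbp s (by omega)
  omega

lemma cr_PS (r : ℕ) (a B' : List ℕ) (ha : a.length = r)
    (a_strict : ∀ s t : ℕ, s < t → s < r → a.getD t 0 < a.getD s 0)
    (getDB : ∀ k, k < r → B'.getD k 0 = a.getD (r - 1 - k) 0 - a.getD (r - k) 0) :
    ∀ k, k ≤ r → psum B' k = a.getD (r - k) 0 := by
  intro k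
  induction k with
  | zero =>
    intro _
    rw [psum_zero, Nat.sub_zero, List.getD_eq_default a 0 (by omega)]
  | succ n ihn =>
    intro hn
    have h1 := ihn (by omega)
    rw [psum_succ, h1, getDB n (by omega)]
    have h2 := a_strict (r - 1 - n) (r - n) (by omega) (by omega)
    rw [show r - (n + 1) = r - 1 - n from by omega]
    omega

lemma cr_psd2 (r i : ℕ) (b d2 : List ℕ) (hi1 : 1 ≤ i) (hi2 : i < r)
    (bpos : ∀ s, s < r → 0 < b.getD s 0)
    (psumb_strict : ∀ s t : ℕ, s < t → t ≤ r → psum b s < psum b t)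
    (getDd2 : ∀ s, d2.getD s 0 =
      if r - i = s then b.getD (r - i) 0 + 1
      else if r - i - 1 = s then b.getD (r - i - 1) 0 - 1 else b.getD s 0) :
    ∀ t, t ≤ r → psum d2 t = if t = r - i then psum b t - 1 else psum b t := by
  intro t
  induction t with
  | zero =>
    intro _
    rw [if_neg (show ¬(0 = r - i) from by omega), psum_zero, psum_zero]
  | succ n ihn =>
    intro hn
    have h1 := ihn (by omega)
    rw [psum_succ, h1, getDd2 n]
    by_cases hni : n = r - i
    · subst hni
      rw [if_pos rfl, if_pos rfl,
        if_neg (show ¬(r - i + 1 = r - i) from by omega), psum_succ]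
      have hs1 := psumb_strict 0 (r - i) (by omega) (by omega)
      rw [psum_zero] at hs1
      omega
    · rw [if_neg hni, if_neg (show ¬(r - i = n) from by omega)]
      by_cases hni2 : r - i - 1 = n
      · rw [if_pos hni2, if_pos (show n + 1 = r - i from by omega), psum_succ, hni2]
        have := bpos n (by omega)
        omega
      · rw [if_neg hni2, if_neg (show ¬(n + 1 = r - i) from by omega), psum_succ]

lemma cr_I2 (r i : ℕ) (b d2 A' eL : List ℕ) (hi1 : 1 ≤ i) (hi2 : i < r)
    (getDA : ∀ k, k < r → A'.getD k 0 = psum b (r - k))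
    (getDeL : ∀ s, eL.getD s 0 = if i = s then A'.getD i 0 - 1 else A'.getD s 0)
    (psd2 : ∀ t, t ≤ r → psum d2 t = if t = r - i then psum b t - 1 else psum b t) :
    ∀ k, k < r → eL.getD k 0 = psum d2 (r - k) := by
  intro k hk
  rw [getDeL k]
  by_cases hik : i = k
  · rw [if_pos hik, psd2 (r - k) (by omega),
      if_pos (show r - k = r - i from by omega), getDA i (by omega),
      show r - k = r - i from by omega]
  · rw [if_neg hik, psd2 (r - k) (by omega),
      if_neg (show ¬(r - k = r - i) from by omega), getDA k (by omega)]

lemma cr_I1 (r i : ℕ) (a c2 B' g2 : List ℕ) (hi1 : 1 ≤ i) (hi2 : i < r)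
    (ha : a.length = r)
    (a_strict : ∀ s t : ℕ, s < t → s < r → a.getD t 0 < a.getD s 0)
    (apos : ∀ s, s < r → 0 < a.getD s 0)
    (getDB : ∀ k, k < r → B'.getD k 0 = a.getD (r - 1 - k) 0 - a.getD (r - k) 0)
    (getDc2 : ∀ s, c2.getD s 0 =
      if r - i = s then a.getD (r - i) 0 - 1 else a.getD s 0)
    (getDg2 : ∀ s, g2.getD s 0 =
      if i = s then B'.getD i 0 + 1
      else if i - 1 = s then B'.getD (i - 1) 0 - 1 else B'.getD s 0) :
    ∀ k, k ≤ r → psum g2 k = c2.getD (r - k) 0 := by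
  intro k
  induction k with
  | zero =>
    intro _
    rw [psum_zero, Nat.sub_zero, getDc2 r, if_neg (show ¬(r - i = r) from by omega),
      List.getD_eq_default a 0 (by omega)]
  | succ n ihn =>
    intro hn
    have h1 := ihn (by omega)
    rw [psum_succ, h1, getDg2 n, getDc2 (r - n), getDc2 (r - (n + 1))]
    by_cases hin : i = n
    · rw [if_pos hin, if_pos (show r - i = r - n from by omega),
        if_neg (show ¬(r - i = r - (n + 1)) from by omega), getDB i (by omega),
        show r - (n + 1) = r - 1 - i from by omega]
      have hq1 := a_strict (r - 1 - i) (r - i) (by omega) (by omega)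
      have hq2 := apos (r - i) (by omega)
      omega
    · rw [if_neg hin]
      by_cases hin2 : i - 1 = n
      · rw [if_pos hin2, if_neg (show ¬(r - i = r - n) from by omega),
          if_pos (show r - i = r - (n + 1) from by omega), getDB (i - 1) (by omega),
          show r - 1 - (i - 1) = r - i from by omega,
          show r - (i - 1) = r - i + 1 from by omega,
          show r - n = r - i + 1 from by omega]
        have hq1 := a_strict (r - i) (r - i + 1) (by omega) (by omega)
        omega
      · rw [if_neg hin2, if_neg (show ¬(r - i = r - n) from by omega),
          if_neg (show ¬(r - i = r - (n + 1)) from by omega), getDB n (by omega),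
          show r - (n + 1) = r - 1 - n from by omega]
        have hq1 := a_strict (r - 1 - n) (r - n) (by omega) (by omega)
        omega

lemma cr_pair (r i : ℕ) (a c2 : List ℕ) (hi1 : 1 ≤ i) (hi2 : i < r)
    (lenc2 : c2.length = r)
    (a_strict : ∀ s t : ℕ, s < t → s < r → a.getD t 0 < a.getD s 0)
    (apos : ∀ s, s < r → 0 < a.getD s 0)
    (getDc2 : ∀ s, c2.getD s 0 =
      if r - i = s then a.getD (r - i) 0 - 1 else a.getD s 0) :
    c2.Pairwise (· ≥ ·) := by
  rw [List.pairwise_iff_getElem]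
  intro s t hs ht hst
  have hsr : s < r := by have := hs; rwa [lenc2] at this
  have f1 : a.getD t 0 < a.getD s 0 := a_strict s t hst hsr
  rw [← List.getD_eq_getElem c2 0 hs, ← List.getD_eq_getElem c2 0 ht,
    getDc2 s, getDc2 t]
  have f2 : 0 < a.getD (r - i) 0 := apos (r - i) (by omega)
  by_cases h1 : r - i = s
  · rw [if_pos h1, if_neg (show ¬(r - i = t) from by omega), h1]
    omega
  · rw [if_neg h1]
    by_cases h2 : r - i = t
    · rw [if_pos h2, h2]
      omega
    · rw [if_neg h2]
      omega

lemma cr_chainA (r : ℕ) (b A' : List ℕ) (lenA' : A'.length = r)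
    (getDA : ∀ k, k < r → A'.getD k 0 = psum b (r - k))
    (psumb_strict : ∀ s t : ℕ, s < t → t ≤ r → psum b s < psum b t) :
    A'.Chain' (· > ·) := by
  unfold List.Chain'
  rw [List.isChain_iff_pairwise, List.pairwise_iff_getElem]
  intro s t hs ht hst
  have hsr : s < r := by have := hs; rwa [lenA'] at this
  have htr : t < r := by have := ht; rwa [lenA'] at this
  rw [← List.getD_eq_getElem A' 0 hs, ← List.getD_eq_getElem A' 0 ht,
    getDA s hsr, getDA t htr]
  exact psumb_strict (r - t) (r - s) (by omega) (by omega)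

end Aux

/-- if `λ = (a_1^{b_1},…,a_r^{b_r})` is canonical and
`λ^T = (a'_1^{b'_1},…,a'_r^{b'_r})` is the canonical decomposition of its
conjugate, then `(λ^T)^i = (λ^{r−i})^T` for `i = 1, …, r−1`. -/
theorem conj_hookRemove (r : ℕ) (a b a' b' : List ℕ)
    (ha : a.length = r) (hb : b.length = r) (ha' : a'.length = r) (hb' : b'.length = r)
    (hch : a.Chain' (· > ·)) (hch' : a'.Chain' (· > ·))
    (hap : ∀ x ∈ a, 0 < x) (hbp : ∀ x ∈ b, 0 < x)
    (hap' : ∀ x ∈ a', 0 < x) (hbp' : ∀ x ∈ b', 0 < x)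
    (hconj : conjP (rectsP a b) = rectsP a' b') :
    ∀ i, 1 ≤ i → i < r →
      hookRemove a' b' (i - 1) = conjP (hookRemove a b (r - i - 1)) := by
  intro i hi1 hi2
  have hr2 : 2 ≤ r := by omega
  have bpos := cr_pos r b hb hbp
  have apos := cr_pos r a ha hap
  have a_strict := cr_strict r a ha hch hap
  have psumb_strict := cr_psum_strict r b hb hbp
  obtain ⟨A', hA'⟩ : ∃ X, X = (List.range r).map (fun k => psum b (r - k)) := ⟨_, rfl⟩
  obtain ⟨B', hB'⟩ : ∃ X, X = (List.range r).map
    (fun k => a.getD (r - 1 - k) 0 - a.getD (r - k) 0) := ⟨_, rfl⟩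
  have lenA' : A'.length = r := by rw [hA', List.length_map, List.length_range]
  have lenB' : B'.length = r := by rw [hB', List.length_map, List.length_range]
  have getDA : ∀ k, k < r → A'.getD k 0 = psum b (r - k) := by
    intro k hk
    rw [hA', List.getD_eq_getElem _ 0 (by rw [List.length_map, List.length_range]; omega)]
    simp
  have getDB : ∀ k, k < r → B'.getD k 0 = a.getD (r - 1 - k) 0 - a.getD (r - k) 0 := by
    intro k hk
    rw [hB', List.getD_eq_getElem _ 0 (by rw [List.length_map, List.length_range]; omega)]
    simp
  have PS := cr_PS r a B' ha a_strict getDB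
  have chA' := cr_chainA r b A' lenA' getDA psumb_strict
  have posA' : ∀ x ∈ A', 0 < x := by
    intro x hx
    rw [hA', List.mem_map] at hx
    obtain ⟨k, hk, rfl⟩ := hx
    rw [List.mem_range] at hk
    have := psumb_strict 0 (r - k) (by omega) (by omega)
    rw [psum_zero] at this
    exact this
  have posB' : ∀ x ∈ B', 0 < x := by
    intro x hx
    rw [hB', List.mem_map] at hx
    obtain ⟨k, hk, rfl⟩ := hx
    rw [List.mem_range] at hk
    have := a_strict (r - 1 - k) (r - k) (by omega) (by omega)
    omega
  have hkey0 : conjP (rectsP a b) = rectsP A' B' :=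
    key_lemma r a b A' B' ha hb lenB' lenA'
      ((List.isChain_iff_pairwise.mp hch).imp fun h => le_of_lt h) PS getDA
  obtain ⟨ea, eb⟩ := rects_unique a' b' A' B' (by omega) (by omega) hch' chA'
    hap' hbp' posA' posB' (hconj.symm.trans hkey0)
  rw [ea, eb]
  unfold hookRemove
  rw [show i - 1 + 1 = i from by omega, show r - i - 1 + 1 = r - i from by omega]
  obtain ⟨c2, hc2⟩ : ∃ X, X = a.set (r - i) (a.getD (r - i) 0 - 1) := ⟨_, rfl⟩
  obtain ⟨d2, hd2⟩ : ∃ X, X = (b.set (r - i - 1) (b.getD (r - i - 1) 0 - 1)).set (r - i)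
    (b.getD (r - i) 0 + 1) := ⟨_, rfl⟩
  obtain ⟨eL, heL⟩ : ∃ X, X = A'.set i (A'.getD i 0 - 1) := ⟨_, rfl⟩
  obtain ⟨g2, hg2⟩ : ∃ X, X = (B'.set (i - 1) (B'.getD (i - 1) 0 - 1)).set i
    (B'.getD i 0 + 1) := ⟨_, rfl⟩
  rw [← hc2, ← hd2, ← heL, ← hg2]
  have lenc2 : c2.length = r := by rw [hc2, List.length_set]; omega
  have lend2 : d2.length = r := by rw [hd2, List.length_set, List.length_set]; omega
  have leneL : eL.length = r := by rw [heL, List.length_set]; omega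
  have leng2 : g2.length = r := by rw [hg2, List.length_set, List.length_set]; omega
  have getDc2 : ∀ s, c2.getD s 0 =
      if r - i = s then a.getD (r - i) 0 - 1 else a.getD s 0 := by
    intro s
    rw [hc2, getD_set a (r - i) s _ (by omega)]
  have getDd2 : ∀ s, d2.getD s 0 =
      if r - i = s then b.getD (r - i) 0 + 1
      else if r - i - 1 = s then b.getD (r - i - 1) 0 - 1 else b.getD s 0 := by
    intro s
    rw [hd2, getD_set _ (r - i) s _ (by rw [List.length_set]; omega),
      getD_set b (r - i - 1) s _ (by omega)]
  have getDeL : ∀ s, eL.getD s 0 =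
      if i = s then A'.getD i 0 - 1 else A'.getD s 0 := by
    intro s
    rw [heL, getD_set A' i s _ (by omega)]
  have getDg2 : ∀ s, g2.getD s 0 =
      if i = s then B'.getD i 0 + 1
      else if i - 1 = s then B'.getD (i - 1) 0 - 1 else B'.getD s 0 := by
    intro s
    rw [hg2, getD_set _ i s _ (by rw [List.length_set]; omega),
      getD_set B' (i - 1) s _ (by omega)]
  have hpair := cr_pair r i a c2 hi1 hi2 lenc2 a_strict apos getDc2
  have psd2 := cr_psd2 r i b d2 hi1 hi2 bpos psumb_strict getDd2
  have I2' := cr_I2 r i b d2 A' eL hi1 hi2 getDA getDeL psd2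
  have I1' := cr_I1 r i a c2 B' g2 hi1 hi2 ha a_strict apos getDB getDc2 getDg2
  exact (key_lemma r c2 d2 eL g2 lenc2 lend2 leng2 leneL hpair I1' I2').symm
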